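/- Let Σ be the ranked alphabet with one binary symbol σ and one nullary symbol α, and let L_i ⊆ T_Σ be the comb tree languages defined below. Then for every ℓ ≥ 1 and every n ∈ ℕ, there exist a tree t ∈ L_{n+1} and a position w ∈ pos(t) such that the set branch_t([], w) ∩ SP^ℓ_n(t) has at least ℓ^{n+1} elements; in particular, SP^ℓ_n(t) ≠ ∅ for some t ∈ L_{n+1}. -/

import Mathlib

namespace Paper

/-- Trees over a ranked alphabet `(Γ, ar)` as a W-type. -/
abbrev Tree {Γ : Type} (ar : Γ → ℕ) : Type := WType (fun g : Γ => Fin (ar g))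

variable {Γ : Type} {ar : Γ → ℕ}

/-- Root symbol of a tree. -/
def root : Tree ar → Γ
  | ⟨g, _⟩ => g

/-- `inPos t w` holds iff `w` is a position of `t`. -/
def inPos : Tree ar → List ℕ → Prop
  | _, [] => True
  | ⟨g, f⟩, i :: w => ∃ h : i < ar g, inPos (f ⟨i, h⟩) w

/-- The set of positions of a tree. -/
def pos (t : Tree ar) : Set (List ℕ) := {w | inPos t w}

/-- Subtree of `t` at position `w` (junk value if `w` is not a position of `t`). -/
def subtree : Tree ar → List ℕ → Tree ar
  | t, [] => t
  | ⟨g, f⟩, i :: w => if h : i < ar g then subtree (f ⟨i, h⟩) w else ⟨g, f⟩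

/-- Branching positions of `t` together with two distinct successor directions. -/
def branch (t : Tree ar) : Set (List ℕ × ℕ × ℕ) :=
  {p | p.1 ∈ pos t ∧ 2 ≤ ar (root (subtree t p.1)) ∧
       p.2.1 < ar (root (subtree t p.1)) ∧ p.2.2 < ar (root (subtree t p.1)) ∧ p.2.1 ≠ p.2.2}

/-- Branching positions of `t` along the path from `w` to `w ++ w''`. -/
def branchPath (t : Tree ar) (w w'' : List ℕ) : Set (List ℕ) :=
  {v | ∃ w', w' <+: w'' ∧ v = w ++ w' ∧ ∃ i j, (w ++ w', i, j) ∈ branch t}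

/-- First projections of a set of triples. -/
def SPof (S : Set (List ℕ × ℕ × ℕ)) : Set (List ℕ) := {w | ∃ i j, (w, i, j) ∈ S}

/-- The sets `SSP^ℓ_n(t)`. -/
def SSP (ℓ : ℕ) : ℕ → Tree ar → Set (List ℕ × ℕ × ℕ)
  | 0, t => branch t
  | n+1, t =>
      {p | p ∈ branch t ∧
        (∃ w₁ ∈ SPof (SSP ℓ n (subtree t (p.1 ++ [p.2.1]))),
          ℓ ^ (n+1) ≤ (branchPath t (p.1 ++ [p.2.1]) w₁ ∩ SPof (SSP ℓ n t)).ncard) ∧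
        (∃ w₂ ∈ SPof (SSP ℓ n (subtree t (p.1 ++ [p.2.2]))),
          ℓ ^ (n+1) ≤ (branchPath t (p.1 ++ [p.2.2]) w₂ ∩ SPof (SSP ℓ n t)).ncard)}

/-- The sets `SP^ℓ_n(t)`. -/
def SP (ℓ n : ℕ) (t : Tree ar) : Set (List ℕ) := SPof (SSP ℓ n t)

/-- Height of a tree: 0 for leaves, otherwise 1 + maximum height of the subtrees. -/
def height : Tree ar → ℕ
  | ⟨_, f⟩ => Finset.univ.sup fun i => height (f i) + 1

/-- Arity function for the alphabet `Δ` extended with `k` nullary variables. -/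
def extAr {Δ : Type} (arΔ : Δ → ℕ) (k : ℕ) : Δ ⊕ Fin k → ℕ := Sum.elim arΔ fun _ => 0

/-- Trees over `Δ` with variables `x_0, …, x_{k-1}`: the set `T_Δ(X_k)`. -/
abbrev TreeX {Δ : Type} (arΔ : Δ → ℕ) (k : ℕ) : Type := Tree (extAr arΔ k)

variable {Δ : Type} {arΔ : Δ → ℕ}

/-- Substitution `s[u 0, …, u (k-1)]` of trees for the variables. -/
def subst {k : ℕ} (u : Fin k → Tree arΔ) : TreeX arΔ k → Tree arΔ
  | ⟨Sum.inl d, f⟩ => ⟨d, fun i => subst u (f i)⟩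
  | ⟨Sum.inr i, _⟩ => u i

/-- The tree map `ĥ` induced by a tree homomorphism `h`. -/
def applyHom {arΓ : Γ → ℕ} (h : ∀ g : Γ, TreeX arΔ (arΓ g)) : Tree arΓ → Tree arΔ
  | ⟨g, f⟩ => subst (fun i => applyHom h (f i)) (h g)

/-- Number of occurrences of the variable `x_i` in a tree of `T_Δ(X_k)`. -/
def varCount {k : ℕ} (i : Fin k) : TreeX arΔ k → ℕ
  | ⟨Sum.inl _, f⟩ => ∑ j, varCount i (f j)
  | ⟨Sum.inr j, _⟩ => if j = i then 1 else 0

/-- A tree homomorphism is linear if every variable occurs at most once in each image. -/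
def Linear {arΓ : Γ → ℕ} (h : ∀ g : Γ, TreeX arΔ (arΓ g)) : Prop :=
  ∀ (g : Γ) (i : Fin (arΓ g)), varCount i (h g) ≤ 1

/-- A tree homomorphism is complete if every variable occurs at least once in each image. -/
def Complete {arΓ : Γ → ℕ} (h : ∀ g : Γ, TreeX arΔ (arΓ g)) : Prop :=
  ∀ (g : Γ) (i : Fin (arΓ g)), 1 ≤ varCount i (h g)

/-- Substitution of trees with variables into a tree with variables. -/
def substC {k : ℕ} (u : Fin k → TreeX arΔ k) : TreeX arΔ k → TreeX arΔ k
  | ⟨Sum.inl d, f⟩ => ⟨Sum.inl d, fun i => substC u (f i)⟩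
  | ⟨Sum.inr i, _⟩ => u i

/-- Embedding of trees into trees with variables. -/
def embed {k : ℕ} : Tree arΔ → TreeX arΔ k
  | ⟨d, f⟩ => ⟨Sum.inl d, fun i => embed (f i)⟩

/-- The alphabet with one binary symbol `σ` and one nullary symbol `α`. -/
inductive Sym : Type
  | sig : Sym
  | alp : Sym

/-- The arity function of `Sym`. -/
def arSym : Sym → ℕ
  | .sig => 2
  | .alp => 0

/-- Trees over the alphabet `Σ = {σ, α}`. -/
abbrev TSig : Type := Tree arSym

/-- The tree `α`. -/
def alphaT : TSig := ⟨Sym.alp, Fin.elim0⟩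

/-- The variable `x` as a context. -/
def varX : TreeX arSym 1 := ⟨Sum.inr 0, Fin.elim0⟩

/-- `σ(c, c')` as a context. -/
def sigX (c c' : TreeX arSym 1) : TreeX arSym 1 := ⟨Sum.inl Sym.sig, ![c, c']⟩

/-- The smallest set of contexts containing `σ(x, t)` for every `t ∈ Lprev` and
closed under context composition `c[c']`. -/
inductive CtxSet (Lprev : Set TSig) : TreeX arSym 1 → Prop
  | base {t : TSig} : t ∈ Lprev → CtxSet Lprev (sigX varX (embed t))
  | comp {c c' : TreeX arSym 1} : CtxSet Lprev c → CtxSet Lprev c' →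
      CtxSet Lprev (substC (fun _ => c') c)

/-- The comb languages: `L_0 = {α}` and `L_{i+1} = { c[α] | c ∈ C_{i+1} }`
where `C_{i+1}` is generated from `L_i`. -/
def Lang : ℕ → Set TSig
  | 0 => {alphaT}
  | i+1 => {t | ∃ c, CtxSet (Lang i) c ∧ subst (fun _ => alphaT) c = t}


/-! ### Auxiliary development -/

section Aux

variable {Γ : Type} {ar : Γ → ℕ}

lemma inPos_nil (t : Tree ar) : inPos t [] := by
  obtain ⟨g, f⟩ := t; trivial

lemma subtree_nil (t : Tree ar) : subtree t [] = t := by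
  obtain ⟨g, f⟩ := t; rfl

lemma inPos_of_append {t : Tree ar} {v u : List ℕ} (h : inPos t (v ++ u)) : inPos t v := by
  induction v generalizing t with
  | nil => exact inPos_nil t
  | cons i v ih =>
    obtain ⟨g, f⟩ := t
    obtain ⟨hi, h⟩ := h
    exact ⟨hi, ih h⟩

lemma subtree_append {t : Tree ar} {v : List ℕ} (hv : inPos t v) (u : List ℕ) :
    subtree t (v ++ u) = subtree (subtree t v) u := by
  induction v generalizing t with
  | nil => rw [List.nil_append, subtree_nil]
  | cons i v ih =>
    obtain ⟨g, f⟩ := t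
    obtain ⟨hi, hv⟩ := hv
    simp only [List.cons_append, subtree, dif_pos hi]
    exact ih hv

lemma inPos_append {t : Tree ar} {v : List ℕ} (hv : inPos t v) (u : List ℕ) :
    inPos t (v ++ u) ↔ inPos (subtree t v) u := by
  induction v generalizing t with
  | nil => rw [List.nil_append, subtree_nil]
  | cons i v ih =>
    obtain ⟨g, f⟩ := t
    obtain ⟨hi, hv⟩ := hv
    simp only [List.cons_append, subtree, dif_pos hi]
    constructor
    · rintro ⟨hi', h⟩; exact (ih hv).mp h
    · intro h; exact ⟨hi, (ih hv).mpr h⟩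

lemma branch_append {t : Tree ar} {v : List ℕ} (hv : inPos t v) (u : List ℕ) (i j : ℕ) :
    (v ++ u, i, j) ∈ branch t ↔ (u, i, j) ∈ branch (subtree t v) := by
  simp only [branch, Set.mem_setOf_eq]
  rw [subtree_append hv u]
  constructor
  · rintro ⟨h1, h2⟩
    exact ⟨(inPos_append hv u).mp h1, h2⟩
  · rintro ⟨h1, h2⟩
    exact ⟨(inPos_append hv u).mpr h1, h2⟩

lemma branchPath_append {t : Tree ar} {v : List ℕ} (hv : inPos t v) (x w : List ℕ) :
    branchPath t (v ++ x) w = (fun z => v ++ z) '' branchPath (subtree t v) x w := by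
  ext y
  simp only [branchPath, Set.mem_setOf_eq, Set.mem_image]
  constructor
  · rintro ⟨w', hw', rfl, i, j, hb⟩
    refine ⟨x ++ w', ⟨w', hw', rfl, i, j, ?_⟩, by rw [List.append_assoc]⟩
    rw [← branch_append hv, ← List.append_assoc]
    exact hb
  · rintro ⟨z, ⟨w', hw', rfl, i, j, hb⟩, rfl⟩
    refine ⟨w', hw', by rw [List.append_assoc], i, j, ?_⟩
    rw [List.append_assoc, branch_append hv]
    exact hb

lemma SSP_append (ℓ : ℕ) : ∀ (n : ℕ) {t : Tree ar} {v : List ℕ}, inPos t v →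
    ∀ (u : List ℕ) (i j : ℕ),
    ((v ++ u, i, j) ∈ SSP ℓ n t ↔ (u, i, j) ∈ SSP ℓ n (subtree t v))
  | 0, t, v, hv, u, i, j => branch_append hv u i j
  | n+1, t, v, hv, u, i, j => by
    simp only [SSP, Set.mem_setOf_eq]
    have hfst : ((v ++ u, i, j) : List ℕ × ℕ × ℕ).1 = v ++ u := rfl
    have key : ∀ d : ℕ,
        ((∃ w₁ ∈ SPof (SSP ℓ n (subtree t ((v ++ u) ++ [d]))),
          ℓ ^ (n+1) ≤ (branchPath t ((v ++ u) ++ [d]) w₁ ∩ SPof (SSP ℓ n t)).ncard) ↔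
        (∃ w₁ ∈ SPof (SSP ℓ n (subtree (subtree t v) (u ++ [d]))),
          ℓ ^ (n+1) ≤ (branchPath (subtree t v) (u ++ [d]) w₁ ∩
            SPof (SSP ℓ n (subtree t v))).ncard)) := by
      intro d
      rw [List.append_assoc, subtree_append hv (u ++ [d])]
      simp only [branchPath_append hv (u ++ [d])]
      apply exists_congr; intro w₁
      apply and_congr_right; intro _
      have hset : (fun z => v ++ z) '' branchPath (subtree t v) (u ++ [d]) w₁ ∩
          SPof (SSP ℓ n t) =
          (fun z => v ++ z) '' (branchPath (subtree t v) (u ++ [d]) w₁ ∩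
            SPof (SSP ℓ n (subtree t v))) := by
        ext y
        simp only [Set.mem_inter_iff, Set.mem_image]
        constructor
        · rintro ⟨⟨z, hz, rfl⟩, hsp⟩
          obtain ⟨a, b, hab⟩ := hsp
          exact ⟨z, ⟨hz, a, b, (SSP_append ℓ n hv z a b).mp hab⟩, rfl⟩
        · rintro ⟨z, ⟨hz, a, b, hab⟩, rfl⟩
          exact ⟨⟨z, hz, rfl⟩, a, b, (SSP_append ℓ n hv z a b).mpr hab⟩
      rw [hset, Set.ncard_image_of_injective _ (fun a b h => by
        simpa using List.append_cancel_left h)]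
    constructor
    · rintro ⟨hb, h0, h1⟩
      exact ⟨(branch_append hv u i j).mp hb, (key i).mp h0, (key j).mp h1⟩
    · rintro ⟨hb, h0, h1⟩
      exact ⟨(branch_append hv u i j).mpr hb, (key i).mpr h0, (key j).mpr h1⟩

lemma SP_append {ℓ n : ℕ} {t : Tree ar} {v : List ℕ} (hv : inPos t v) (u : List ℕ) :
    v ++ u ∈ SP ℓ n t ↔ u ∈ SP ℓ n (subtree t v) := by
  simp only [SP, SPof, Set.mem_setOf_eq]
  exact exists_congr fun i => exists_congr fun j => SSP_append ℓ n hv u i j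

lemma SSP_subset_branch (ℓ n : ℕ) (t : Tree ar) : SSP ℓ n t ⊆ branch t := by
  cases n with
  | zero => exact fun p hp => hp
  | succ n => exact fun p hp => hp.1

lemma SP_subset_pos {ℓ n : ℕ} {t : Tree ar} {w : List ℕ} (h : w ∈ SP ℓ n t) : inPos t w := by
  obtain ⟨i, j, hij⟩ := h
  exact (SSP_subset_branch ℓ n t hij).1

lemma branchPath_finite (t : Tree ar) (x w : List ℕ) : (branchPath t x w).Finite := by
  apply Set.Finite.subset (Set.Finite.image (fun z => x ++ z) (List.finite_toSet w.inits))
  rintro y ⟨w', hw', rfl, _⟩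
  exact ⟨w', by simpa using hw', rfl⟩

end Aux


section Aux2

lemma subst_substC {Δ : Type} {arΔ : Δ → ℕ} {k : ℕ} (u : Fin k → Tree arΔ)
    (v : Fin k → TreeX arΔ k) : ∀ c, subst u (substC v c) = subst (fun i => subst u (v i)) c
  | ⟨Sum.inl d, f⟩ => by
    simp only [substC, subst]
    exact congrArg (WType.mk d) (funext fun i => subst_substC u v (f i))
  | ⟨Sum.inr i, _⟩ => rfl

lemma subst_embed {Δ : Type} {arΔ : Δ → ℕ} {k : ℕ} (u : Fin k → Tree arΔ) :
    ∀ t, subst u (embed (k := k) t) = t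
  | ⟨d, f⟩ => by
    simp only [embed, subst]
    exact congrArg (WType.mk d) (funext fun i => subst_embed u (f i))

/-- Left spine with bottom `b` and right subtrees `s`. -/
def spineW (s b : TSig) : ℕ → TSig
  | 0 => b
  | m+1 => ⟨Sym.sig, ![spineW s b m, s]⟩

lemma subst_sigX (s : TSig) (u : Fin 1 → TSig) :
    subst u (sigX varX (embed s)) = ⟨Sym.sig, ![u 0, s]⟩ := by
  simp only [sigX, subst]
  refine congrArg (WType.mk Sym.sig) (funext fun i => ?_)
  fin_cases i
  · rfl
  · exact subst_embed u s

lemma spineW_mem {n : ℕ} {s : TSig} (hs : s ∈ Lang n) (m : ℕ) :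
    spineW s alphaT (m + 1) ∈ Lang (n + 1) := by
  have key : ∀ m : ℕ, ∃ c, CtxSet (Lang n) c ∧
      ∀ u : Fin 1 → TSig, subst u c = spineW s (u 0) (m + 1) := by
    intro m
    induction m with
    | zero => exact ⟨sigX varX (embed s), CtxSet.base hs, fun u => subst_sigX s u⟩
    | succ m ih =>
      obtain ⟨c, hc, hsub⟩ := ih
      refine ⟨substC (fun _ => c) (sigX varX (embed s)),
        CtxSet.comp (CtxSet.base hs) hc, fun u => ?_⟩
      rw [subst_substC, subst_sigX]
      show (⟨Sym.sig, ![subst u c, s]⟩ : TSig) = _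
      rw [hsub u]
      rfl
  obtain ⟨c, hc, hsub⟩ := key m
  exact ⟨c, hc, hsub fun _ => alphaT⟩

lemma spineW_pos {s b : TSig} : ∀ {k m : ℕ}, k ≤ m → inPos (spineW s b m) (List.replicate k 0)
  | 0, m, _ => inPos_nil _
  | k+1, m+1, h => by
    refine ⟨by norm_num [spineW, arSym], ?_⟩
    show inPos (![spineW s b m, s] _) (List.replicate k 0)
    exact spineW_pos (Nat.succ_le_succ_iff.mp h)

lemma spineW_subtree {s b : TSig} : ∀ {k m : ℕ}, k ≤ m →
    subtree (spineW s b m) (List.replicate k 0) = spineW s b (m - k)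
  | 0, m, _ => subtree_nil _
  | k+1, m+1, h => by
    show subtree (⟨Sym.sig, ![spineW s b m, s]⟩ : TSig) (0 :: List.replicate k 0) = _
    rw [show ((⟨Sym.sig, ![spineW s b m, s]⟩ : TSig) : TSig) = ⟨Sym.sig, ![spineW s b m, s]⟩ from rfl]
    simp only [subtree]
    rw [dif_pos (by norm_num [arSym])]
    show subtree (![spineW s b m, s] _) (List.replicate k 0) = _
    have : (![spineW s b m, s] (⟨0, by norm_num [arSym]⟩ : Fin (arSym Sym.sig))) = spineW s b m := rfl
    rw [this, spineW_subtree (Nat.succ_le_succ_iff.mp h), Nat.succ_sub_succ]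

lemma spineW_pos_one {s b : TSig} (m : ℕ) : inPos (spineW s b (m + 1)) [1] :=
  ⟨by norm_num [spineW, arSym], inPos_nil _⟩

lemma spineW_subtree_one {s b : TSig} (m : ℕ) : subtree (spineW s b (m + 1)) [1] = s := by
  show subtree (⟨Sym.sig, ![spineW s b m, s]⟩ : TSig) [1] = s
  simp only [subtree]
  rw [dif_pos (by norm_num [arSym])]
  rfl

lemma spineW_root (s b : TSig) (m : ℕ) : root (spineW s b (m + 1)) = Sym.sig := rfl

lemma rep_prefix {k N : ℕ} (h : k ≤ N) :
    List.replicate k (0:ℕ) <+: List.replicate N 0 :=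
  ⟨List.replicate (N - k) 0, by rw [← List.replicate_add]; congr 1; omega⟩

lemma ncard_ge_rep {S : Set (List ℕ)} (hS : S.Finite) {N : ℕ}
    (h : ∀ k ≤ N, List.replicate k (0:ℕ) ∈ S) : N + 1 ≤ S.ncard := by
  have hinj : Function.Injective (fun k : ℕ => List.replicate k (0:ℕ)) := fun a b hab => by
    simpa using congrArg List.length hab
  have hsub : (fun k : ℕ => List.replicate k (0:ℕ)) '' Set.Iic N ⊆ S := by
    rintro _ ⟨k, hk, rfl⟩; exact h k hk
  have := Set.ncard_le_ncard hsub hS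
  rwa [Set.ncard_image_of_injective _ hinj, ← Finset.coe_Iic, Set.ncard_coe_finset,
    Nat.card_Iic] at this

end Aux2


section Aux3

lemma SP_eq (ℓ n : ℕ) (t : TSig) : SPof (SSP ℓ n t) = SP ℓ n t := rfl

lemma spineW_branch {s b : TSig} {m k : ℕ} (h : k < m) :
    (List.replicate k 0, 0, 1) ∈ branch (spineW s b m) := by
  refine ⟨spineW_pos h.le, ?_⟩
  show 2 ≤ arSym (root (subtree (spineW s b m) (List.replicate k 0))) ∧ _
  rw [spineW_subtree h.le]
  obtain ⟨d, hd⟩ : ∃ d, m - k = d + 1 := ⟨m - k - 1, by omega⟩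
  rw [hd, spineW_root]
  norm_num [arSym]

lemma path_count (ℓ n : ℕ) {t s : TSig} {v : List ℕ} (hv : inPos t v)
    (hsub : subtree t v = s) (ws : List ℕ) :
    (branchPath t v ws ∩ SP ℓ n t).ncard = (branchPath s [] ws ∩ SP ℓ n s).ncard := by
  have h1 : branchPath t v ws = (fun z => v ++ z) '' branchPath s [] ws := by
    have h := branchPath_append hv [] ws
    rw [List.append_nil, hsub] at h
    exact h
  rw [h1]
  have hset : (fun z => v ++ z) '' branchPath s [] ws ∩ SP ℓ n t
      = (fun z => v ++ z) '' (branchPath s [] ws ∩ SP ℓ n s) := by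
    ext y
    simp only [Set.mem_inter_iff, Set.mem_image]
    constructor
    · rintro ⟨⟨z, hz, rfl⟩, hsp⟩
      rw [SP_append hv, hsub] at hsp
      exact ⟨z, ⟨hz, hsp⟩, rfl⟩
    · rintro ⟨z, ⟨hz, hsp⟩, rfl⟩
      refine ⟨⟨z, hz, rfl⟩, ?_⟩
      rw [SP_append hv, hsub]
      exact hsp
  rw [hset, Set.ncard_image_of_injective _ (fun a b h => List.append_cancel_left h)]

lemma branchPath_cons_subset (t : TSig) (a : ℕ) (w : List ℕ) :
    branchPath t [a] w ⊆ branchPath t [] (a :: w) := by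
  rintro y ⟨w', ⟨r, hr⟩, rfl, i, j, hb⟩
  exact ⟨a :: w', ⟨r, by rw [← hr]; rfl⟩, rfl, i, j, hb⟩

lemma main_lemma (ℓ : ℕ) (hℓ : 1 ≤ ℓ) : ∀ n : ℕ, ∃ t ∈ Lang (n+1), ∃ w ∈ SP ℓ n t,
    ℓ ^ (n+1) ≤ (branchPath t [] w ∩ SP ℓ n t).ncard := by
  intro n
  induction n with
  | zero =>
    obtain ⟨N, rfl⟩ : ∃ N, ℓ = N + 1 := ⟨ℓ - 1, by omega⟩
    set t : TSig := spineW alphaT alphaT (N + 1) with ht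
    have hmem : t ∈ Lang 1 := spineW_mem rfl N
    have hbr : ∀ k ≤ N, (List.replicate k 0, 0, 1) ∈ branch t :=
      fun k hk => spineW_branch (by omega)
    have hsp : ∀ k ≤ N, List.replicate k 0 ∈ SP (N+1) 0 t :=
      fun k hk => ⟨0, 1, hbr k hk⟩
    have hF : ∀ k ≤ N, List.replicate k 0 ∈
        branchPath t [] (List.replicate N 0) ∩ SP (N+1) 0 t := by
      intro k hk
      exact ⟨⟨List.replicate k 0, rep_prefix hk, rfl, 0, 1, hbr k hk⟩, hsp k hk⟩
    refine ⟨t, hmem, List.replicate N 0, hsp N le_rfl, ?_⟩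
    have := ncard_ge_rep ((branchPath_finite t [] _).inter_of_left _) hF
    simpa using this
  | succ n ih =>
    obtain ⟨s, hsL, ws, hws, hcount⟩ := ih
    set M : ℕ := ℓ ^ (n + 2) with hM
    have hM1 : 1 ≤ M := Nat.one_le_pow _ _ hℓ
    set t : TSig := spineW s alphaT (M + 1) with ht
    have hmem : t ∈ Lang (n + 2) := spineW_mem hsL M
    -- key: spine positions are in SSP at level n+1
    have hssp : ∀ k, k < M → (List.replicate k 0, 0, 1) ∈ SSP ℓ (n+1) t := by
      intro k hk
      have hbr : (List.replicate k 0, 0, 1) ∈ branch t := spineW_branch (by omega)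
      -- direction 1 (right child is s)
      have hv1 : inPos t (List.replicate k 0 ++ [1]) := by
        rw [inPos_append (spineW_pos (by omega : k ≤ M + 1)),
          spineW_subtree (by omega : k ≤ M + 1)]
        obtain ⟨d, hd⟩ : ∃ d, M + 1 - k = d + 1 := ⟨M - k, by omega⟩
        rw [hd]
        exact spineW_pos_one d
      have hsub1 : subtree t (List.replicate k 0 ++ [1]) = s := by
        rw [subtree_append (spineW_pos (by omega : k ≤ M + 1)),
          spineW_subtree (by omega : k ≤ M + 1)]
        obtain ⟨d, hd⟩ : ∃ d, M + 1 - k = d + 1 := ⟨M - k, by omega⟩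
        rw [hd, spineW_subtree_one]
      -- direction 0 (left child is a shorter spine)
      have hpos0 : inPos t (List.replicate (k+1) 0) := spineW_pos (by omega)
      have hsub0 : subtree t (List.replicate (k+1) 0) = spineW s alphaT (M - k) := by
        rw [spineW_subtree (by omega : k + 1 ≤ M + 1)]
        congr 1
        omega
      obtain ⟨d, hd⟩ : ∃ d, M - k = d + 1 := ⟨M - k - 1, by omega⟩
      have hv01 : inPos t (List.replicate (k+1) 0 ++ [1]) := by
        rw [inPos_append hpos0, hsub0, hd]
        exact spineW_pos_one d
      have hsub01 : subtree t (List.replicate (k+1) 0 ++ [1]) = s := by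
        rw [subtree_append hpos0, hsub0, hd, spineW_subtree_one]
      have hrep : List.replicate k 0 ++ [0] = List.replicate (k+1) (0:ℕ) :=
        (List.replicate_succ' (n := k) (a := (0:ℕ))).symm ▸ rfl
      refine ⟨hbr, ?_, ?_⟩
      · -- left: witness 1 :: ws in the subtree at rep k ++ [0] = rep (k+1)
        refine ⟨1 :: ws, ?_, ?_⟩
        · show 1 :: ws ∈ SPof (SSP ℓ n (subtree t (List.replicate k 0 ++ [0])))
          rw [SP_eq, hrep, hsub0, hd]
          have := (SP_append (ℓ := ℓ) (n := n) (t := spineW s alphaT (d+1)) (spineW_pos_one d) ws)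
          rw [spineW_subtree_one] at this
          exact this.mpr hws
        · show ℓ ^ (n+1) ≤ (branchPath t (List.replicate k 0 ++ [0]) (1 :: ws)
            ∩ SPof (SSP ℓ n t)).ncard
          rw [SP_eq, hrep, path_count ℓ n hpos0 hsub0, hd]
          calc ℓ ^ (n+1) ≤ (branchPath s [] ws ∩ SP ℓ n s).ncard := hcount
            _ = (branchPath (spineW s alphaT (d+1)) [1] ws
                  ∩ SP ℓ n (spineW s alphaT (d+1))).ncard := by
                rw [path_count ℓ n (spineW_pos_one d) (spineW_subtree_one d)]
            _ ≤ _ := Set.ncard_le_ncard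
                (Set.inter_subset_inter_left _ (branchPath_cons_subset _ 1 ws))
                ((branchPath_finite _ [] _).inter_of_left _)
      · -- right: witness ws in the subtree at rep k ++ [1]
        refine ⟨ws, ?_, ?_⟩
        · show ws ∈ SPof (SSP ℓ n (subtree t (List.replicate k 0 ++ [1])))
          rw [SP_eq, hsub1]
          exact hws
        · show ℓ ^ (n+1) ≤ (branchPath t (List.replicate k 0 ++ [1]) ws
            ∩ SPof (SSP ℓ n t)).ncard
          rw [SP_eq, path_count ℓ n hv1 hsub1]
          exact hcount
    have hsp : ∀ k, k < M → List.replicate k 0 ∈ SP ℓ (n+1) t :=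
      fun k hk => ⟨0, 1, hssp k hk⟩
    obtain ⟨N, hN⟩ : ∃ N, M = N + 1 := ⟨M - 1, by omega⟩
    have hF : ∀ k ≤ N, List.replicate k 0 ∈
        branchPath t [] (List.replicate N 0) ∩ SP ℓ (n+1) t := by
      intro k hk
      exact ⟨⟨List.replicate k 0, rep_prefix hk, rfl, 0, 1, spineW_branch (by omega)⟩,
        hsp k (by omega)⟩
    refine ⟨t, hmem, List.replicate N 0, hsp N (by omega), ?_⟩
    have := ncard_ge_rep ((branchPath_finite t [] _).inter_of_left _) hF
    omega

end Aux3

/-- for every `ℓ ≥ 1` and `n`, there exist `t ∈ L_{n+1}` and a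
position `w` of `t` such that `branch_t([], w) ∩ SP^ℓ_n(t)` has at least `ℓ^{n+1}`
elements; in particular `SP^ℓ_n(t) ≠ ∅`. -/
theorem comb_SP_lower_bound (ℓ : ℕ) (hℓ : 1 ≤ ℓ) (n : ℕ) :
    ∃ t ∈ Lang (n + 1),
      (∃ w ∈ pos t, ℓ ^ (n + 1) ≤ (branchPath t [] w ∩ SP ℓ n t).ncard) ∧
      (SP ℓ n t).Nonempty := by
  obtain ⟨t, hmem, w, hw, hcount⟩ := main_lemma ℓ hℓ n
  exact ⟨t, hmem, ⟨w, SP_subset_pos hw, hcount⟩, ⟨w, hw⟩⟩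

end Paper
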